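/- Let G be a finite connected simple graph and let a, b, c, d be vertices of G. Then there exists a subgraph H of G that contains a, b, c, d among its vertices, is connected, is acyclic, and whose number of edges e(H) satisfies 2 · e(H) ≤ dist(a,b) + dist(a,c) + dist(a,d) + dist(b,c) + dist(b,d) + dist(c,d), where dist denotes the shortest-path distance in G. -/

import Mathlib

open SimpleGraph

/-- Deleting a non-bridge edge keeps a graph connected. -/
lemma aux_del_conn {W : Type*} {G : SimpleGraph W} (h : G.Connected) {v w : W}
    (hr : (G \ SimpleGraph.fromEdgeSet {s(v, w)}).Reachable v w) :
    (G \ SimpleGraph.fromEdgeSet {s(v, w)}).Connected := by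
  set G' := G \ SimpleGraph.fromEdgeSet {s(v, w)} with hG'
  have hstep : ∀ x y : W, G.Adj x y → G'.Reachable x y := by
    intro x y hxy
    by_cases he : s(x, y) = s(v, w)
    · rw [Sym2.eq_iff] at he
      rcases he with ⟨rfl, rfl⟩ | ⟨rfl, rfl⟩
      · exact hr
      · exact hr.symm
    · refine SimpleGraph.Adj.reachable ?_
      rw [hG', SimpleGraph.sdiff_adj, SimpleGraph.fromEdgeSet_adj]
      exact ⟨hxy, by simp [he]⟩
  have key : ∀ {x y : W}, G.Walk x y → G'.Reachable x y := by
    intro x y p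
    induction p with
    | nil => exact SimpleGraph.Reachable.refl _
    | cons hadj _ ih => exact (hstep _ _ hadj).trans ih
  refine (SimpleGraph.connected_iff G').mpr ⟨fun x y => ?_, h.nonempty⟩
  obtain ⟨p⟩ := h.preconnected x y
  exact key p

/-- Every connected graph on a finite vertex type contains a connected acyclic
spanning subgraph. -/
lemma aux_exists_tree_aux {W : Type*} [Fintype W] :
    ∀ n (G : SimpleGraph W), G.edgeSet.ncard ≤ n → G.Connected →
      ∃ T, T ≤ G ∧ T.Connected ∧ T.IsAcyclic := by
  intro n
  induction n with
  | zero =>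
    intro G hle hconn
    by_cases hac : G.IsAcyclic
    · exact ⟨G, le_rfl, hconn, hac⟩
    · exfalso
      rw [isAcyclic_iff_forall_adj_isBridge] at hac
      push_neg at hac
      obtain ⟨x, y, hadj, -⟩ := hac
      have hmem : s(x, y) ∈ G.edgeSet := hadj
      have : 0 < G.edgeSet.ncard :=
        (Set.ncard_pos (Set.toFinite _)).mpr ⟨_, hmem⟩
      omega
  | succ n ih =>
    intro G hle hconn
    by_cases hac : G.IsAcyclic
    · exact ⟨G, le_rfl, hconn, hac⟩
    · rw [isAcyclic_iff_forall_adj_isBridge] at hac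
      push_neg at hac
      obtain ⟨v, w, hadj, hnb⟩ := hac
      have hr : (G \ SimpleGraph.fromEdgeSet {s(v, w)}).Reachable v w := by
        by_contra h'
        exact hnb (isBridge_iff.mpr h')
      have hconn' := aux_del_conn hconn hr
      have hes : (G \ SimpleGraph.fromEdgeSet {s(v, w)}).edgeSet
          = G.edgeSet \ {s(v, w)} := by
        rw [edgeSet_sdiff, edgeSet_fromEdgeSet, edgeSet_sdiff_sdiff_isDiag]
      have hlt : (G \ SimpleGraph.fromEdgeSet {s(v, w)}).edgeSet.ncard
          < G.edgeSet.ncard := by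
        rw [hes]
        exact Set.ncard_diff_singleton_lt_of_mem hadj (Set.toFinite _)
      obtain ⟨T, hT1, hT2, hT3⟩ :=
        ih (G \ SimpleGraph.fromEdgeSet {s(v, w)}) (by omega) hconn'
      exact ⟨T, hT1.trans sdiff_le, hT2, hT3⟩

lemma aux_exists_tree {W : Type*} [Fintype W] (G : SimpleGraph W) (h : G.Connected) :
    ∃ T, T ≤ G ∧ T.Connected ∧ T.IsAcyclic :=
  aux_exists_tree_aux G.edgeSet.ncard G le_rfl h

/-- For a chosen center `x`, there is a connected acyclic subgraph containing
`x, y, z, w` with at most `dist x y + dist x z + dist x w` edges. -/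
lemma aux_center {V : Type*} [Fintype V] (G : SimpleGraph V) (hG : G.Connected)
    (x y z w : V) :
    ∃ H : G.Subgraph, x ∈ H.verts ∧ y ∈ H.verts ∧ z ∈ H.verts ∧ w ∈ H.verts ∧
      H.Connected ∧ H.coe.IsAcyclic ∧
      H.edgeSet.ncard ≤ G.dist x y + G.dist x z + G.dist x w := by
  classical
  obtain ⟨p1, hp1⟩ := (hG.preconnected x y).exists_walk_length_eq_dist
  obtain ⟨p2, hp2⟩ := (hG.preconnected x z).exists_walk_length_eq_dist
  obtain ⟨p3, hp3⟩ := (hG.preconnected x w).exists_walk_length_eq_dist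
  set K : G.Subgraph := p1.toSubgraph ⊔ p2.toSubgraph ⊔ p3.toSubgraph with hKdef
  have hK12 : (p1.toSubgraph ⊔ p2.toSubgraph).Connected :=
    SimpleGraph.Subgraph.connected_sup p1.toSubgraph_connected.preconnected p2.toSubgraph_connected.preconnected
      ⟨x, p1.start_mem_verts_toSubgraph, p2.start_mem_verts_toSubgraph⟩
  have hKconn : K.Connected :=
    SimpleGraph.Subgraph.connected_sup hK12.preconnected p3.toSubgraph_connected.preconnected
      ⟨x, Or.inl p1.start_mem_verts_toSubgraph, p3.start_mem_verts_toSubgraph⟩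
  have hxK : x ∈ K.verts := Or.inl (Or.inl p1.start_mem_verts_toSubgraph)
  have hyK : y ∈ K.verts := Or.inl (Or.inl p1.end_mem_verts_toSubgraph)
  have hzK : z ∈ K.verts := Or.inl (Or.inr p2.end_mem_verts_toSubgraph)
  have hwK : w ∈ K.verts := Or.inr p3.end_mem_verts_toSubgraph
  -- bound on number of edges of `K`
  have hcard1 : ∀ {u v : V} (p : G.Walk u v),
      p.toSubgraph.edgeSet.ncard ≤ p.length := by
    intro u v p
    have h2 : p.toSubgraph.edgeSet = ↑p.edges.toFinset := by
      rw [p.edgeSet_toSubgraph]; ext e; simp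
    rw [h2, Set.ncard_coe_finset]
    calc p.edges.toFinset.card ≤ p.edges.length := p.edges.toFinset_card_le
      _ = p.length := p.length_edges
  have hKcard : K.edgeSet.ncard ≤ G.dist x y + G.dist x z + G.dist x w := by
    have h1 : K.edgeSet = p1.toSubgraph.edgeSet ∪ p2.toSubgraph.edgeSet
        ∪ p3.toSubgraph.edgeSet := by
      rw [hKdef, SimpleGraph.Subgraph.edgeSet_sup, SimpleGraph.Subgraph.edgeSet_sup]
    rw [h1]
    calc (p1.toSubgraph.edgeSet ∪ p2.toSubgraph.edgeSet ∪ p3.toSubgraph.edgeSet).ncard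
        ≤ (p1.toSubgraph.edgeSet ∪ p2.toSubgraph.edgeSet).ncard
          + p3.toSubgraph.edgeSet.ncard := Set.ncard_union_le _ _
      _ ≤ p1.toSubgraph.edgeSet.ncard + p2.toSubgraph.edgeSet.ncard
          + p3.toSubgraph.edgeSet.ncard := by
            have := Set.ncard_union_le p1.toSubgraph.edgeSet p2.toSubgraph.edgeSet
            omega
      _ ≤ p1.length + p2.length + p3.length := by
            have := hcard1 p1; have := hcard1 p2; have := hcard1 p3; omega
      _ = G.dist x y + G.dist x z + G.dist x w := by rw [hp1, hp2, hp3]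
  -- extract a spanning tree of `K`
  haveI : Fintype ↥K.verts := Fintype.ofFinite _
  obtain ⟨T, hTle, hTconn, hTac⟩ := aux_exists_tree K.coe hKconn.coe
  let H : G.Subgraph :=
    { verts := K.verts
      Adj := fun u v => ∃ (hu : u ∈ K.verts) (hv : v ∈ K.verts),
        T.Adj ⟨u, hu⟩ ⟨v, hv⟩
      adj_sub := fun h => K.adj_sub (hTle h.2.2)
      edge_vert := fun h => h.1
      symm := ⟨fun u v h => ⟨h.2.1, h.1, h.2.2.symm⟩⟩ }
  have hcoe : H.coe = T := by
    ext ⟨u, hu⟩ ⟨v, hv⟩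
    exact ⟨fun ⟨_, _, ha⟩ => ha, fun ha => ⟨hu, hv, ha⟩⟩
  refine ⟨H, hxK, hyK, hzK, hwK, ?_, ?_, ?_⟩
  · exact SimpleGraph.Subgraph.connected_iff'.mpr (by rw [hcoe]; exact hTconn)
  · rw [hcoe]; exact hTac
  · have hsub : H.edgeSet ⊆ K.edgeSet := by
      rw [← SimpleGraph.Subgraph.image_coe_edgeSet_coe H,
        ← SimpleGraph.Subgraph.image_coe_edgeSet_coe K, hcoe]
      exact Set.image_mono (SimpleGraph.edgeSet_mono hTle)
    exact le_trans (Set.ncard_le_ncard hsub (Set.toFinite _)) hKcard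

/-- In a finite connected simple graph, for any four vertices `a, b, c, d` there is a
connected acyclic subgraph containing them whose number of edges is at most half the
sum of the six pairwise shortest-path distances. -/
theorem stmt_5 {V : Type*} [Fintype V] (G : SimpleGraph V) (hG : G.Connected)
    (a b c d : V) :
    ∃ H : G.Subgraph, a ∈ H.verts ∧ b ∈ H.verts ∧ c ∈ H.verts ∧ d ∈ H.verts ∧
      H.Connected ∧ H.coe.IsAcyclic ∧
      2 * H.edgeSet.ncard ≤
        G.dist a b + G.dist a c + G.dist a d + G.dist b c + G.dist b d + G.dist c d := by
  have hba : G.dist b a = G.dist a b := SimpleGraph.dist_comm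
  have hca : G.dist c a = G.dist a c := SimpleGraph.dist_comm
  have hda : G.dist d a = G.dist a d := SimpleGraph.dist_comm
  have hcb : G.dist c b = G.dist b c := SimpleGraph.dist_comm
  have hdb : G.dist d b = G.dist b d := SimpleGraph.dist_comm
  have hdc : G.dist d c = G.dist c d := SimpleGraph.dist_comm
  set Sa := G.dist a b + G.dist a c + G.dist a d with hSa
  set Sb := G.dist a b + G.dist b c + G.dist b d with hSb
  set Sc := G.dist a c + G.dist b c + G.dist c d with hSc
  set Sd := G.dist a d + G.dist b d + G.dist c d with hSd
  have hcases : (Sa ≤ Sb ∧ Sa ≤ Sc ∧ Sa ≤ Sd) ∨ (Sb ≤ Sa ∧ Sb ≤ Sc ∧ Sb ≤ Sd) ∨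
      (Sc ≤ Sa ∧ Sc ≤ Sb ∧ Sc ≤ Sd) ∨ (Sd ≤ Sa ∧ Sd ≤ Sb ∧ Sd ≤ Sc) := by omega
  rcases hcases with ⟨h1, h2, h3⟩ | ⟨h1, h2, h3⟩ | ⟨h1, h2, h3⟩ | ⟨h1, h2, h3⟩
  · obtain ⟨H, m1, m2, m3, m4, hc, hac, hcard⟩ := aux_center G hG a b c d
    exact ⟨H, m1, m2, m3, m4, hc, hac, by omega⟩
  · obtain ⟨H, m2, m1, m3, m4, hc, hac, hcard⟩ := aux_center G hG b a c d
    rw [hba] at hcard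
    exact ⟨H, m1, m2, m3, m4, hc, hac, by omega⟩
  · obtain ⟨H, m3, m1, m2, m4, hc, hac, hcard⟩ := aux_center G hG c a b d
    rw [hca, hcb] at hcard
    exact ⟨H, m1, m2, m3, m4, hc, hac, by omega⟩
  · obtain ⟨H, m4, m1, m2, m3, hc, hac, hcard⟩ := aux_center G hG d a b c
    rw [hda, hdb, hdc] at hcard
    exact ⟨H, m1, m2, m3, m4, hc, hac, by omega⟩
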